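/- (Quantitative form of Theorem 3.1.) Under the Hilbert propagator setup and the Hilbert solution setup, assume S := sup_{t≥0} ‖U(t)‖ < ∞ and M := sup_{t≥0} ‖U(t)‖·∫₀ᵗ ‖V(ξ)‖·α(ξ) dξ satisfies 0 < M < ∞. Let ε > 0 satisfy ε^{p−1}·M < 1/4, and assume ‖u₀‖·S < ε/4, ‖u₀‖ < ε, and β(t) ≤ ε·α(t)/(4M) for all t ≥ 0. Then ‖u(t)‖ ≤ ε for all t ∈ [0,T). -/

import Mathlib

open MeasureTheory Filter
open scoped ENNReal

theorem stmt12
    {H : Type*} [NormedAddCommGroup H] [InnerProductSpace ℂ H] [CompleteSpace H]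
    (B U V : ℝ → H →L[ℂ] H)
    (hB : Continuous B)
    (hU0 : U 0 = 1) (hV0 : V 0 = 1)
    (hVU : ∀ t, 0 ≤ t → (V t).comp (U t) = 1)
    (hUV : ∀ t, 0 ≤ t → (U t).comp (V t) = 1)
    (hUd : ∀ t, 0 ≤ t → HasDerivAt U ((B t).comp (U t)) t)
    (hVd : ∀ t, 0 ≤ t → HasDerivAt V (-((V t).comp (B t))) t)
    (p : ℝ) (hp : 1 < p)
    (α β : ℝ → ℝ) (hαc : Continuous α) (hβc : Continuous β)
    (hα0 : ∀ t, 0 ≤ α t) (hβ0 : ∀ t, 0 ≤ β t)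
    (T : ℝ≥0∞) (hT : 0 < T)
    (u w G f : ℝ → H) (u₀ : H) (hu0 : u 0 = u₀)
    (hwc : ContinuousOn w {t : ℝ | 0 ≤ t ∧ ENNReal.ofReal t < T})
    (hGc : ContinuousOn G {t : ℝ | 0 ≤ t ∧ ENNReal.ofReal t < T})
    (hfc : ContinuousOn f {t : ℝ | 0 ≤ t ∧ ENNReal.ofReal t < T})
    (hud : ∀ t, 0 ≤ t → ENNReal.ofReal t < T →
      HasDerivAt u (B t (u t) + w t + G t + f t) t)
    (hw : ∀ t, 0 ≤ t → ENNReal.ofReal t < T →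
      (inner ℂ (V t (w t)) (V t (u t)) : ℂ).re ≤ 0)
    (hGb : ∀ t, 0 ≤ t → ENNReal.ofReal t < T → ‖G t‖ ≤ α t * ‖u t‖ ^ p)
    (hfb : ∀ t, 0 ≤ t → ENNReal.ofReal t < T → ‖f t‖ ≤ β t)
    (hVud : ∀ t, 0 ≤ t → ENNReal.ofReal t < T →
      DifferentiableAt ℝ (fun s => ‖V s (u s)‖) t)
    (S M ε : ℝ)
    (hS : ∀ t, 0 ≤ t → ‖U t‖ ≤ S)
    (hM : ∀ t, 0 ≤ t → ‖U t‖ * ∫ ξ in (0:ℝ)..t, ‖V ξ‖ * α ξ ≤ M)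
    (hM0 : 0 < M)
    (hε : 0 < ε) (hεM : ε ^ (p - 1) * M < 1 / 4)
    (hu₀S : ‖u₀‖ * S < ε / 4) (hu₀ε : ‖u₀‖ < ε)
    (hβε : ∀ t, 0 ≤ t → β t ≤ ε * α t / (4 * M)) :
    ∀ t, 0 ≤ t → ENNReal.ofReal t < T → ‖u t‖ ≤ ε := by
  have hp0 : (0:ℝ) < p := by linarith
  set N : ℝ → ℝ := fun s => ‖V s (u s)‖ with hN
  set ρ : ℝ → ℝ := fun s => ‖V s‖ * (α s * ‖u s‖ ^ p + β s) with hρ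
  have hρ0 : ∀ s, 0 ≤ ρ s := fun s =>
    mul_nonneg (norm_nonneg _) (add_nonneg
      (mul_nonneg (hα0 s) (Real.rpow_nonneg (norm_nonneg _) p)) (hβ0 s))
  have huc : ∀ x, 0 ≤ x → ENNReal.ofReal x < T → ContinuousAt u x := fun x hx hxT =>
    (hud x hx hxT).continuousAt
  have hVc : ∀ x, 0 ≤ x → ContinuousAt V x := fun x hx => (hVd x hx).continuousAt
  have hρcont : ∀ x, 0 ≤ x → ENNReal.ofReal x < T → ContinuousAt ρ x := by
    intro x hx hxT
    have h1 : ContinuousAt (fun s => ‖V s‖) x := (hVc x hx).norm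
    have h2 : ContinuousAt (fun s => ‖u s‖ ^ p) x :=
      ContinuousAt.rpow_const ((huc x hx hxT).norm) (Or.inr hp0.le)
    exact h1.mul ((hαc.continuousAt.mul h2).add hβc.continuousAt)
  -- the key derivative bound
  have hNd : ∀ x, 0 ≤ x → ENNReal.ofReal x < T →
      HasDerivAt (fun s => V s (u s)) ((V x) (w x + G x + f x)) x := by
    intro x hx hxT
    have hVr : HasDerivAt (fun s => (V s).restrictScalars ℝ)
        ((-((V x).comp (B x))).restrictScalars ℝ) x :=
      (ContinuousLinearMap.restrictScalarsL ℂ H H ℝ ℝ).hasFDerivAt.comp_hasDerivAt x (hVd x hx)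
    have h1 := hVr.clm_apply (hud x hx hxT)
    have h2 : (fun y => ((V y).restrictScalars ℝ) (u y)) = fun y => V y (u y) := rfl
    rw [h2] at h1
    convert h1 using 1
    simp only [ContinuousLinearMap.coe_restrictScalars', ContinuousLinearMap.neg_apply,
      ContinuousLinearMap.comp_apply, map_add]
    abel
  have hkey : ∀ x, 0 ≤ x → ENNReal.ofReal x < T →
      deriv (fun s => ‖V s (u s)‖) x ≤ ρ x := by
    intro x hx hxT
    rcases eq_or_lt_of_le (norm_nonneg (V x (u x))) with h0 | h0
    · have hmin : IsLocalMin (fun s => ‖V s (u s)‖) x :=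
        Filter.Eventually.of_forall (fun s => by
          simp only
          rw [← h0]
          exact norm_nonneg _)
      rw [hmin.deriv_eq_zero]
      exact hρ0 x
    · have hg := hNd x hx hxT
      have hD : HasDerivAt (fun s => ‖V s (u s)‖) (deriv (fun s => ‖V s (u s)‖) x) x :=
        (hVud x hx hxT).hasDerivAt
      set d := deriv (fun s => ‖V s (u s)‖) x with hd
      have hin : HasDerivAt (fun s => (inner ℂ (V s (u s)) (V s (u s)) : ℂ))
          ((inner ℂ (V x (u x)) (V x (w x + G x + f x)) : ℂ)
            + (inner ℂ (V x (w x + G x + f x)) (V x (u x)) : ℂ)) x :=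
        hg.inner ℂ hg
      have hre : HasDerivAt (fun s => ((inner ℂ (V s (u s)) (V s (u s)) : ℂ)).re)
          (((inner ℂ (V x (u x)) (V x (w x + G x + f x)) : ℂ)
            + (inner ℂ (V x (w x + G x + f x)) (V x (u x)) : ℂ)).re) x :=
        Complex.reCLM.hasFDerivAt.comp_hasDerivAt x hin
      have funeq : (fun s => ((inner ℂ (V s (u s)) (V s (u s)) : ℂ)).re)
          = fun s => ‖V s (u s)‖ * ‖V s (u s)‖ := by
        funext s
        rw [← RCLike.re_to_complex, inner_self_eq_norm_mul_norm]
      rw [funeq] at hre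
      have huniq := hre.unique (hD.mul hD)
      -- rewrite the complex derivative's real part
      have hconj : (inner ℂ (V x (u x)) (V x (w x + G x + f x)) : ℂ)
          = starRingEnd ℂ (inner ℂ (V x (w x + G x + f x)) (V x (u x)) : ℂ) :=
        (inner_conj_symm _ _).symm
      have hre2 : ((inner ℂ (V x (u x)) (V x (w x + G x + f x)) : ℂ)
            + (inner ℂ (V x (w x + G x + f x)) (V x (u x)) : ℂ)).re
          = 2 * ((inner ℂ (V x (w x + G x + f x)) (V x (u x)) : ℂ)).re := by
        rw [hconj, Complex.add_re, Complex.conj_re]; ring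
      have hsplit : ((inner ℂ (V x (w x + G x + f x)) (V x (u x)) : ℂ)).re
          = ((inner ℂ (V x (w x)) (V x (u x)) : ℂ)).re
            + ((inner ℂ (V x (G x)) (V x (u x)) : ℂ)).re
            + ((inner ℂ (V x (f x)) (V x (u x)) : ℂ)).re := by
        rw [map_add, map_add, inner_add_left, inner_add_left, Complex.add_re, Complex.add_re]
      have hG1 : ((inner ℂ (V x (G x)) (V x (u x)) : ℂ)).re ≤ ‖V x‖ * ‖G x‖ * ‖V x (u x)‖ := by
        calc ((inner ℂ (V x (G x)) (V x (u x)) : ℂ)).re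
            ≤ ‖(inner ℂ (V x (G x)) (V x (u x)) : ℂ)‖ := Complex.re_le_norm _
          _ = ‖(inner ℂ (V x (G x)) (V x (u x)) : ℂ)‖ := rfl
          _ ≤ ‖V x (G x)‖ * ‖V x (u x)‖ := norm_inner_le_norm _ _
          _ ≤ ‖V x‖ * ‖G x‖ * ‖V x (u x)‖ :=
              mul_le_mul_of_nonneg_right ((V x).le_opNorm _) (norm_nonneg _)
      have hf1 : ((inner ℂ (V x (f x)) (V x (u x)) : ℂ)).re ≤ ‖V x‖ * ‖f x‖ * ‖V x (u x)‖ := by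
        calc ((inner ℂ (V x (f x)) (V x (u x)) : ℂ)).re
            ≤ ‖(inner ℂ (V x (f x)) (V x (u x)) : ℂ)‖ := Complex.re_le_norm _
          _ = ‖(inner ℂ (V x (f x)) (V x (u x)) : ℂ)‖ := rfl
          _ ≤ ‖V x (f x)‖ * ‖V x (u x)‖ := norm_inner_le_norm _ _
          _ ≤ ‖V x‖ * ‖f x‖ * ‖V x (u x)‖ :=
              mul_le_mul_of_nonneg_right ((V x).le_opNorm _) (norm_nonneg _)
      have hw1 := hw x hx hxT
      have hGf : ‖G x‖ + ‖f x‖ ≤ α x * ‖u x‖ ^ p + β x :=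
        add_le_add (hGb x hx hxT) (hfb x hx hxT)
      have hVn : (0:ℝ) ≤ ‖V x‖ := norm_nonneg _
      have hdn : d * ‖V x (u x)‖ ≤ ρ x * ‖V x (u x)‖ := by
        have h1 : d * ‖V x (u x)‖ + ‖V x (u x)‖ * d
            = 2 * ((inner ℂ (V x (w x + G x + f x)) (V x (u x)) : ℂ)).re := by
          rw [← huniq, hre2]
        have h2 : ‖V x‖ * (‖G x‖ + ‖f x‖) ≤ ρ x := by
          rw [hρ]
          exact mul_le_mul_of_nonneg_left hGf hVn
        nlinarith [norm_nonneg (V x (u x)), hsplit, hG1, hf1, hw1]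
      exact le_of_mul_le_mul_right hdn h0
  -- the main a-priori estimate
  have Est : ∀ c, 0 ≤ c → ENNReal.ofReal c < T →
      (∀ s, 0 ≤ s → s ≤ c → ‖u s‖ ≤ ε) → ‖u c‖ ≤ 3 * ε / 4 := by
    intro c hc hcT hsmall
    have hscope : ∀ s, 0 ≤ s → s ≤ c → ENNReal.ofReal s < T := fun s hs hsc =>
      lt_of_le_of_lt (ENNReal.ofReal_le_ofReal hsc) hcT
    have hρco : ContinuousOn ρ (Set.Icc 0 c) := fun s hs =>
      (hρcont s hs.1 (hscope s hs.1 hs.2)).continuousWithinAt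
    have hρcoU : ContinuousOn ρ (Set.uIcc 0 c) := by rwa [Set.uIcc_of_le hc]
    have hint : IntervalIntegrable ρ volume 0 c := hρcoU.intervalIntegrable
    have hNco : ContinuousOn N (Set.Icc 0 c) := fun s hs =>
      ((hVud s hs.1 (hscope s hs.1 hs.2)).continuousAt).continuousWithinAt
    set h : ℝ → ℝ := fun s => ∫ ξ in (0:ℝ)..s, ρ ξ with hh
    have hhco : ContinuousOn h (Set.Icc 0 c) := by
      have := intervalIntegral.continuousOn_primitive_interval'
        (μ := volume) (f := ρ) (b₁ := (0:ℝ)) (b₂ := c) hint Set.left_mem_uIcc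
      rwa [Set.uIcc_of_le hc] at this
    have hmono : MonotoneOn (fun s => h s - N s) (Set.Icc 0 c) := by
      apply monotoneOn_of_deriv_nonneg (convex_Icc 0 c) (hhco.sub hNco)
      · intro x hx
        rw [interior_Icc] at hx
        have hx0 : (0:ℝ) ≤ x := hx.1.le
        have hxT := hscope x hx0 hx.2.le
        have hhd : HasDerivAt h (ρ x) x := by
          refine intervalIntegral.integral_hasDerivAt_right
            (hint.mono_set ?_)
            (ContinuousAt.stronglyMeasurableAtFilter (s := Set.Ioo (0:ℝ) c) isOpen_Ioo
              (fun y hy => hρcont y hy.1.le (hscope y hy.1.le hy.2.le)) x hx)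
            (hρcont x hx0 hxT)
          rw [Set.uIcc_of_le hx0, Set.uIcc_of_le hc]
          exact Set.Icc_subset_Icc le_rfl hx.2.le
        exact (hhd.differentiableAt.sub (hVud x hx0 hxT)).differentiableWithinAt
      · intro x hx
        rw [interior_Icc] at hx
        have hx0 : (0:ℝ) ≤ x := hx.1.le
        have hxT := hscope x hx0 hx.2.le
        have hhd : HasDerivAt h (ρ x) x := by
          refine intervalIntegral.integral_hasDerivAt_right
            (hint.mono_set ?_)
            (ContinuousAt.stronglyMeasurableAtFilter (s := Set.Ioo (0:ℝ) c) isOpen_Ioo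
              (fun y hy => hρcont y hy.1.le (hscope y hy.1.le hy.2.le)) x hx)
            (hρcont x hx0 hxT)
          rw [Set.uIcc_of_le hx0, Set.uIcc_of_le hc]
          exact Set.Icc_subset_Icc le_rfl hx.2.le
        rw [deriv_sub hhd.differentiableAt (hVud x hx0 hxT), hhd.deriv]
        have := hkey x hx0 hxT
        linarith
    have hNc : N c ≤ ‖u₀‖ + h c := by
      have h1 := hmono (Set.left_mem_Icc.2 hc) (Set.right_mem_Icc.2 hc) hc
      have hh0 : h 0 = 0 := intervalIntegral.integral_same
      have hN0 : N 0 = ‖u₀‖ := by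
        simp [hN, hu0, hV0]
      simp only [hh0, hN0] at h1
      linarith
    -- bound the integral
    set I := ∫ ξ in (0:ℝ)..c, ‖V ξ‖ * α ξ with hI
    have hVAco : ContinuousOn (fun ξ => ‖V ξ‖ * α ξ) (Set.uIcc 0 c) := by
      rw [Set.uIcc_of_le hc]
      intro s hs
      exact (((hVc s hs.1).norm).mul hαc.continuousAt).continuousWithinAt
    have hVAint : IntervalIntegrable (fun ξ => ‖V ξ‖ * α ξ) volume 0 c :=
      hVAco.intervalIntegrable
    have hI0 : 0 ≤ I := intervalIntegral.integral_nonneg hc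
      (fun s _ => mul_nonneg (norm_nonneg _) (hα0 s))
    have hcoef0 : (0:ℝ) ≤ ε ^ p + ε / (4 * M) := by
      have := Real.rpow_nonneg hε.le p
      positivity
    have hhc : h c ≤ (ε ^ p + ε / (4 * M)) * I := by
      have hmon : h c ≤ ∫ ξ in (0:ℝ)..c, (ε ^ p + ε / (4 * M)) * (‖V ξ‖ * α ξ) := by
        apply intervalIntegral.integral_mono_on hc hint (hVAint.const_mul _)
        intro s hs
        have h1 : ‖u s‖ ^ p ≤ ε ^ p :=
          Real.rpow_le_rpow (norm_nonneg _) (hsmall s hs.1 hs.2) hp0.le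
        have h2 : β s ≤ ε * α s / (4 * M) := hβε s hs.1
        have hVn : (0:ℝ) ≤ ‖V s‖ := norm_nonneg _
        have h3 : α s * ‖u s‖ ^ p + β s ≤ α s * ε ^ p + ε * α s / (4 * M) :=
          add_le_add (mul_le_mul_of_nonneg_left h1 (hα0 s)) h2
        calc ρ s ≤ ‖V s‖ * (α s * ε ^ p + ε * α s / (4 * M)) :=
              mul_le_mul_of_nonneg_left h3 hVn
          _ = (ε ^ p + ε / (4 * M)) * (‖V s‖ * α s) := by ring
      rwa [intervalIntegral.integral_const_mul] at hmon
    have hUVc : U c ((V c) (u c)) = u c := by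
      have h1 : ((U c).comp (V c)) (u c) = u c := by rw [hUV c hc]; simp
      simpa using h1
    have hUc0 : (0:ℝ) ≤ ‖U c‖ := norm_nonneg _
    have h4 : ‖u c‖ ≤ ‖U c‖ * N c := by
      conv_lhs => rw [← hUVc]
      exact (U c).le_opNorm _
    have h5 : ‖u c‖ ≤ ‖U c‖ * ‖u₀‖ + ‖U c‖ * h c := by
      calc ‖u c‖ ≤ ‖U c‖ * N c := h4
        _ ≤ ‖U c‖ * (‖u₀‖ + h c) := mul_le_mul_of_nonneg_left hNc hUc0
        _ = ‖U c‖ * ‖u₀‖ + ‖U c‖ * h c := mul_add _ _ _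
    have h6' : ‖U c‖ * ‖u₀‖ ≤ ε / 4 := by
      have := mul_le_mul_of_nonneg_right (hS c hc) (norm_nonneg u₀)
      nlinarith [hu₀S]
    have h7 : ‖U c‖ * h c ≤ ε / 4 + ε / 4 := by
      have hUI : ‖U c‖ * I ≤ M := hM c hc
      have hA : ‖U c‖ * h c ≤ (ε ^ p + ε / (4 * M)) * (‖U c‖ * I) := by
        calc ‖U c‖ * h c ≤ ‖U c‖ * ((ε ^ p + ε / (4 * M)) * I) :=
            mul_le_mul_of_nonneg_left hhc hUc0
          _ = (ε ^ p + ε / (4 * M)) * (‖U c‖ * I) := by ring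
      have hB : (ε ^ p + ε / (4 * M)) * (‖U c‖ * I) ≤ (ε ^ p + ε / (4 * M)) * M :=
        mul_le_mul_of_nonneg_left hUI hcoef0
      have hεp : ε ^ p * M ≤ ε / 4 := by
        have h1 := Real.rpow_add hε (p - 1) 1
        rw [Real.rpow_one] at h1
        have h2 : p - 1 + 1 = p := by ring
        rw [h2] at h1
        have h3 : ε ^ (p - 1) * M * ε ≤ (1/4) * ε := mul_le_mul_of_nonneg_right hεM.le hε.le
        calc ε ^ p * M = ε ^ (p - 1) * M * ε := by rw [h1]; ring
          _ ≤ (1/4) * ε := h3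
          _ = ε / 4 := by ring
      have hεM' : ε / (4 * M) * M = ε / 4 := by
        field_simp
      calc ‖U c‖ * h c ≤ (ε ^ p + ε / (4 * M)) * M := le_trans hA hB
        _ = ε ^ p * M + ε / (4 * M) * M := by ring
        _ ≤ ε / 4 + ε / 4 := by rw [hεM']; linarith
    linarith
  -- bootstrap / continuous induction
  intro t ht htT
  have hscope : ∀ s, 0 ≤ s → s ≤ t → ENNReal.ofReal s < T := fun s hs hst =>
    lt_of_le_of_lt (ENNReal.ofReal_le_ofReal hst) htT
  have hucont : ∀ s, 0 ≤ s → s ≤ t → ContinuousAt u s := fun s hs hst =>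
    huc s hs (hscope s hs hst)
  set A : Set ℝ := {s : ℝ | s ∈ Set.Icc 0 t ∧ ∀ r, 0 ≤ r → r ≤ s → ‖u r‖ ≤ ε} with hA
  have h0A : (0:ℝ) ∈ A := by
    refine ⟨⟨le_rfl, ht⟩, fun r hr hr0 => ?_⟩
    have : r = 0 := le_antisymm hr0 hr
    rw [this, hu0]
    exact hu₀ε.le
  have hbdd : BddAbove A := ⟨t, fun s hs => hs.1.2⟩
  set c := sSup A with hc
  have hcA1 : (0:ℝ) ≤ c := le_csSup hbdd h0A
  have hct : c ≤ t := csSup_le ⟨0, h0A⟩ (fun s hs => hs.1.2)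
  have hcball : ∀ r, 0 ≤ r → r < c → ‖u r‖ ≤ ε := by
    intro r hr hrc
    obtain ⟨a, haA, hra⟩ := exists_lt_of_lt_csSup ⟨0, h0A⟩ hrc
    exact haA.2 r hr hra.le
  have hcle : ‖u c‖ ≤ ε := by
    rcases eq_or_lt_of_le hcA1 with h0 | h0
    · rw [← h0, hu0]
      exact hu₀ε.le
    · have hcont : ContinuousAt (fun s => ‖u s‖) c := (hucont c hcA1 hct).norm
      have htend : Tendsto (fun s => ‖u s‖) (nhdsWithin c (Set.Iio c)) (nhds ‖u c‖) :=
        hcont.continuousWithinAt.tendsto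
      refine le_of_tendsto htend ?_
      have hev : ∀ᶠ s in nhdsWithin c (Set.Iio c), (0:ℝ) < s :=
        eventually_nhdsWithin_of_eventually_nhds (eventually_gt_nhds h0)
      filter_upwards [self_mem_nhdsWithin, hev] with s hs hs0
      exact hcball s hs0.le hs
  have hcAA : c ∈ A := ⟨⟨hcA1, hct⟩, fun r hr hrc =>
    hrc.lt_or_eq.elim (fun h => hcball r hr h) (fun h => h ▸ hcle)⟩
  rcases eq_or_lt_of_le hct with hceq | hclt
  · exact hcAA.2 t ht (le_of_eq hceq.symm)
  · exfalso
    have hest : ‖u c‖ ≤ 3 * ε / 4 :=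
      Est c hcA1 (hscope c hcA1 hct) (fun s hs hsc => hcAA.2 s hs hsc)
    have hcont : ContinuousAt (fun s => ‖u s‖) c := (hucont c hcA1 hct).norm
    have hlt : ‖u c‖ < ε := lt_of_le_of_lt hest (by linarith)
    have hev : ∀ᶠ s in nhds c, ‖u s‖ < ε := hcont.eventually_lt_const hlt
    obtain ⟨δ, hδ, hball⟩ := Metric.eventually_nhds_iff_ball.mp hev
    set c' := min (c + δ / 2) t with hc'
    have hcc' : c < c' := lt_min (by linarith) hclt
    have hc'A : c' ∈ A := by
      refine ⟨⟨le_trans hcA1 hcc'.le, min_le_right _ _⟩, fun r hr hrc' => ?_⟩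
      rcases le_or_gt r c with hrle | hrgt
      · exact hcAA.2 r hr hrle
      · refine (hball r ?_).le
        rw [Metric.mem_ball, Real.dist_eq, abs_lt]
        have : r ≤ c + δ / 2 := le_trans hrc' (min_le_left _ _)
        constructor <;> linarith
    have := le_csSup hbdd hc'A
    linarith
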